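/- Let f : ℝ^n → ℝ be twice continuously differentiable on an open convex set U containing the segment [θ, θ'], with Hessian H that is L_H-Lipschitz on U in operator norm. Suppose H(θ) is invertible with ‖H(θ)⁻¹‖ ≤ κ, let g = ∇f(θ), p = −H(θ)⁻¹g, and θ' = θ + η·p for η > 0. Then ∇f(θ') = (1 − η)·g + r, where the remainder satisfies ‖r‖ ≤ (L_H/2)·κ²·η²·‖g‖². -/

import Mathlib

-- Taylor-style quadratic remainder lemma for a map with Lipschitz derivative along a segment.
theorem taylor_grad {E : Type*} [NormedAddCommGroup E] [NormedSpace ℝ E]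
    (G : E → E) (L : ℝ) (θ v : E)
    (hdiff : ∀ t ∈ Set.Icc (0:ℝ) 1, HasFDerivAt G (fderiv ℝ G (θ + t • v)) (θ + t • v))
    (hlip : ∀ t ∈ Set.Icc (0:ℝ) 1,
      ‖fderiv ℝ G (θ + t • v) - fderiv ℝ G θ‖ ≤ L * ‖(θ + t • v) - θ‖) :
    ‖G (θ + v) - G θ - fderiv ℝ G θ v‖ ≤ L / 2 * ‖v‖ ^ 2 := by
  set H := fderiv ℝ G θ with hH
  set φ : ℝ → E := fun t => G (θ + t • v) - t • H v - G θ with hφ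
  have hφ' : ∀ t ∈ Set.Icc (0:ℝ) 1,
      HasDerivAt φ ((fderiv ℝ G (θ + t • v)) v - H v) t := by
    intro t ht
    have h1 : HasDerivAt (fun t : ℝ => θ + t • v) v t := by
      simpa using ((hasDerivAt_id t).smul_const v).const_add θ
    have h2 : HasDerivAt (fun t => G (θ + t • v)) ((fderiv ℝ G (θ + t • v)) v) t :=
      (hdiff t ht).comp_hasDerivAt t h1
    simpa [φ] using (h2.sub ((hasDerivAt_id t).smul_const (H v))).sub_const (G θ)
  have key : ∀ x ∈ Set.Icc (0:ℝ) 1, ‖φ x‖ ≤ L * ‖v‖ ^ 2 / 2 * x ^ 2 := by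
    intro x hx
    refine image_norm_le_of_norm_deriv_right_le_deriv_boundary
      (f' := fun t => (fderiv ℝ G (θ + t • v)) v - H v)
      (B := fun t => L * ‖v‖ ^ 2 / 2 * t ^ 2) (B' := fun t => L * ‖v‖ ^ 2 * t)
      (fun t ht => ((hφ' t ht).continuousAt).continuousWithinAt)
      (fun t ht => ((hφ' t (Set.mem_Icc_of_Ico ht)).hasDerivWithinAt))
      (by simp [φ]) (fun y => ?_) ?_ hx
    · have h := ((hasDerivAt_pow 2 y).const_mul (L * ‖v‖ ^ 2 / 2))
      refine h.congr_deriv ?_; push_cast; ring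
    · intro t ht
      have h3 : ‖(fderiv ℝ G (θ + t • v) - H) v‖ ≤ L * ‖(θ + t • v) - θ‖ * ‖v‖ :=
        le_trans (ContinuousLinearMap.le_opNorm _ _)
          (mul_le_mul_of_nonneg_right (hlip t (Set.mem_Icc_of_Ico ht)) (norm_nonneg v))
      have h4 : ‖(θ + t • v) - θ‖ = t * ‖v‖ := by
        rw [add_sub_cancel_left, norm_smul, Real.norm_eq_abs, abs_of_nonneg ht.1]
      calc ‖(fderiv ℝ G (θ + t • v)) v - H v‖ = ‖(fderiv ℝ G (θ + t • v) - H) v‖ := by simp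
        _ ≤ L * (t * ‖v‖) * ‖v‖ := by rwa [h4] at h3
        _ = L * ‖v‖ ^ 2 * t := by ring
  have h1 := key 1 (by norm_num)
  have : φ 1 = G (θ + v) - G θ - H v := by simp [φ]; abel
  rw [this] at h1
  calc ‖G (θ + v) - G θ - H v‖ ≤ L * ‖v‖ ^ 2 / 2 * 1 ^ 2 := h1
    _ = L / 2 * ‖v‖ ^ 2 := by ring

open scoped RealInnerProductSpace

theorem gradient_after_newton_step
    {n : ℕ} (f : EuclideanSpace ℝ (Fin n) → ℝ)
    (U : Set (EuclideanSpace ℝ (Fin n))) (hU : IsOpen U) (hUconv : Convex ℝ U)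
    (LH κ η : ℝ) (hLH : 0 < LH) (hκ : 0 < κ) (hη : 0 < η)
    (hf : ContDiffOn ℝ 2 f U)
    (hLip : ∀ x ∈ U, ∀ y ∈ U,
      ‖fderiv ℝ (gradient f) x - fderiv ℝ (gradient f) y‖ ≤ LH * ‖x - y‖)
    (θ : EuclideanSpace ℝ (Fin n)) (hθ : θ ∈ U)
    (Hinv : EuclideanSpace ℝ (Fin n) →L[ℝ] EuclideanSpace ℝ (Fin n))
    (hinv₁ : Hinv.comp (fderiv ℝ (gradient f) θ) = ContinuousLinearMap.id ℝ _)
    (hinv₂ : (fderiv ℝ (gradient f) θ).comp Hinv = ContinuousLinearMap.id ℝ _)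
    (hκbound : ‖Hinv‖ ≤ κ)
    (hseg : segment ℝ θ (θ + η • (-(Hinv (gradient f θ)))) ⊆ U) :
    ‖gradient f (θ + η • (-(Hinv (gradient f θ)))) - (1 - η) • gradient f θ‖ ≤
      (LH / 2) * κ ^ 2 * η ^ 2 * ‖gradient f θ‖ ^ 2 := by
  set G := gradient f with hG
  set g := G θ with hg
  set v := η • (-(Hinv g)) with hv
  -- G is C¹ on U, hence differentiable at points of U
  have hG1 : ContDiffOn ℝ 1 G U := by
    have h1 : ContDiffOn ℝ 1 (fderiv ℝ f) U := hf.fderiv_of_isOpen hU (by norm_num)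
    have : G = fun x => (InnerProductSpace.toDual ℝ _).symm (fderiv ℝ f x) := rfl
    rw [this]
    exact (InnerProductSpace.toDual ℝ _).symm.contDiff.comp_contDiffOn h1
  have hGdiff : ∀ x ∈ U, HasFDerivAt G (fderiv ℝ G x) x := fun x hx =>
    ((hG1.differentiableOn one_ne_zero).differentiableAt (hU.mem_nhds hx)).hasFDerivAt
  -- points on the segment
  have hmem : ∀ t ∈ Set.Icc (0:ℝ) 1, θ + t • v ∈ U := by
    intro t ht
    apply hseg
    refine ⟨1 - t, t, by linarith [ht.2], ht.1, by ring, ?_⟩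
    rw [smul_add]
    module
  -- Taylor bound
  have htaylor := taylor_grad G LH θ v
    (fun t ht => hGdiff _ (hmem t ht))
    (fun t ht => hLip _ (hmem t ht) θ hθ)
  -- H v = -η • g
  have hHv : (fderiv ℝ G θ) v = -(η • g) := by
    have h0 : (fderiv ℝ G θ) (Hinv g) = g := by
      have := congrArg (fun T => T g) hinv₂
      simpa using this
    simp [hv, map_smul, map_neg, h0]
  have heq : G (θ + v) - G θ - (fderiv ℝ G θ) v = G (θ + v) - (1 - η) • g := by
    rw [hHv, hg, sub_smul, one_smul]
    abel
  rw [heq] at htaylor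
  -- norm bound on v
  have hvnorm : ‖v‖ ≤ η * (κ * ‖g‖) := by
    have : ‖Hinv g‖ ≤ κ * ‖g‖ :=
      le_trans (Hinv.le_opNorm g) (mul_le_mul_of_nonneg_right hκbound (norm_nonneg g))
    calc ‖v‖ = η * ‖Hinv g‖ := by
          rw [hv, norm_smul, norm_neg, Real.norm_eq_abs, abs_of_pos hη]
      _ ≤ η * (κ * ‖g‖) := by nlinarith
  refine htaylor.trans ?_
  have h2 : ‖v‖ ^ 2 ≤ (η * (κ * ‖g‖)) ^ 2 :=
    pow_le_pow_left₀ (norm_nonneg v) hvnorm 2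
  calc LH / 2 * ‖v‖ ^ 2 ≤ LH / 2 * (η * (κ * ‖g‖)) ^ 2 := by nlinarith
    _ = LH / 2 * κ ^ 2 * η ^ 2 * ‖g‖ ^ 2 := by ring
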